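/- Suppose F satisfies the class F₈/F₉-type condition F(x,y,z) = F(x,y,ξ)η(z) + F(x,z,ξ)η(y) with F(x,y,ξ) = F(φx,φy,ξ) and F(x,ξ,ξ)=0 for all x,y. Then the Nijenhuis-type tensor satisfies N(x,y,z) = 2{η(x)F(y,φz,ξ) - η(y)F(x,φz,ξ)}, and hence N(φx, φy, z) = 0 for all x,y,z. -/
import Mathlib


theorem stmt12 (V : Type*) [AddCommGroup V] [Module ℝ V]
    (φ : V →ₗ[ℝ] V) (ξ : V) (η : V →ₗ[ℝ] ℝ)
    (hφξ : φ ξ = 0) (hφ2 : ∀ x : V, φ (φ x) = -x + η x • ξ)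
    (hηφ : ∀ x : V, η (φ x) = 0) (hηξ : η ξ = 1)
    (g : V →ₗ[ℝ] V →ₗ[ℝ] ℝ) (hsym : ∀ x y : V, g x y = g y x)
    (hB : ∀ x y : V, g (φ x) (φ y) = - g x y + η x * η y)
    (F : V →ₗ[ℝ] V →ₗ[ℝ] V →ₗ[ℝ] ℝ)
    (hF1 : ∀ x y z : V, F x y z = F x z y)
    (hF2 : ∀ x y z : V, F x y z = F x (φ y) (φ z) + η y * F x ξ z + η z * F x y ξ)
    (hF3 : ∀ x y z : V, F x y z = F x y ξ * η z + F x z ξ * η y)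
    (hF4 : ∀ x y : V, F x y ξ = F (φ x) (φ y) ξ)
    (hF5 : ∀ x : V, F x ξ ξ = 0)
    (N : V → V → V → ℝ)
    (hN : ∀ x y z : V, N x y z = F (φ x) y z - F x y (φ z) + F x (φ y) ξ * η z
          - F (φ y) x z + F y x (φ z) - F y (φ x) ξ * η z) :
    (∀ x y z : V, N x y z = 2 * (η x * F y (φ z) ξ - η y * F x (φ z) ξ)) ∧
    (∀ x y z : V, N (φ x) (φ y) z = 0) := by
  have hξ0 : ∀ w : V, F ξ w ξ = 0 := by
    intro w
    rw [hF4, hφξ, map_zero, LinearMap.zero_apply, LinearMap.zero_apply]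
  have hkey : ∀ x y : V, F (φ x) y ξ = - F x (φ y) ξ := by
    intro x y
    rw [hF4 (φ x) y, hφ2, map_add, map_neg, map_smul, LinearMap.add_apply,
      LinearMap.neg_apply, LinearMap.smul_apply, LinearMap.add_apply,
      LinearMap.neg_apply, LinearMap.smul_apply, hξ0]
    simp
  have main : ∀ x y z : V, N x y z = 2 * (η x * F y (φ z) ξ - η y * F x (φ z) ξ) := by
    intro x y z
    rw [hN, hF3 (φ x) y z, hF3 x y (φ z), hF3 (φ y) x z, hF3 y x (φ z),
      hkey x y, hkey x z, hkey y x, hkey y z, hηφ]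
    ring
  refine ⟨main, fun x y z => ?_⟩
  rw [main, hηφ, hηφ]
  ring
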